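/- Let α be an algebraic integer in a number field K of degree m over ℚ, and suppose every archimedean absolute value of α is strictly less than n-1 for some integer n ≥ 3. Then there exists a nonnegative integer square matrix C (of some size l) all of whose row sums equal n-1 and which has α as an eigenvalue (over K). -/

import Mathlib

open Finset

theorem exists_row_sum_matrix_with_eigenvalue (K : Type*) [Field K] [NumberField K]
    (α : K) (hint : IsIntegral ℤ α) (n : ℕ) (hn : 3 ≤ n)
    (habs : ∀ σ : K →+* ℂ, ‖σ α‖ < (n : ℝ) - 1) :
    ∃ (l : ℕ) (_ : 0 < l) (C : Matrix (Fin l) (Fin l) ℕ),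
      (∀ i, ∑ j, C i j = n - 1) ∧
      ∃ w : Fin l → K, w ≠ 0 ∧ (C.map (Nat.cast : ℕ → K)).mulVec w = α • w := by
  classical
  have hcard : 0 < Fintype.card (K →+* ℂ) := by
    rw [NumberField.Embeddings.card K ℂ]; exact Module.finrank_pos
  haveI hne : Nonempty (K →+* ℂ) := Fintype.card_pos_iff.mp hcard
  set r : ℕ := n - 1 with hr
  have hr2 : 2 ≤ r := by omega
  have hr0 : (0:ℝ) < (r:ℝ) := by
    have : 0 < r := by omega
    exact_mod_cast this
  have hrR : ((r : ℝ)) = (n : ℝ) - 1 := by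
    have h1 : 1 ≤ n := by omega
    push_cast [hr, Nat.cast_sub h1]; ring
  -- c : max of archimedean absolute values of α
  set c : ℝ := Finset.univ.sup' Finset.univ_nonempty (fun σ : K →+* ℂ => ‖σ α‖)
    with hcdef
  have hcα : ∀ σ : K →+* ℂ, ‖σ α‖ ≤ c := by
    intro σ; rw [hcdef]
    exact Finset.le_sup' (fun σ : K →+* ℂ => ‖σ α‖) (Finset.mem_univ σ)
  have hc0 : 0 ≤ c := by
    obtain ⟨σ⟩ := hne; exact le_trans (norm_nonneg _) (hcα σ)
  have hclt : c < (r : ℝ) := by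
    rw [hcdef, Finset.sup'_lt_iff]
    intro σ _
    rw [hrR]; exact habs σ
  -- the subalgebra ℤ[α]
  set M : Subalgebra ℤ K := Algebra.adjoin ℤ {α} with hM
  have hfgM : (Subalgebra.toSubmodule M).FG := hint.fg_adjoin_singleton
  obtain ⟨s, hs⟩ := hfgM
  -- covering constant
  set g : K → ℝ := fun x => Finset.univ.sup' Finset.univ_nonempty
    (fun σ : K →+* ℂ => ‖σ x‖) with hgdef
  have hg : ∀ (x : K) (σ : K →+* ℂ), ‖σ x‖ ≤ g x := by
    intro x σ; rw [hgdef]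
    exact Finset.le_sup' (fun σ : K →+* ℂ => ‖σ x‖) (Finset.mem_univ σ)
  have hg0 : ∀ x : K, 0 ≤ g x := by
    intro x; obtain ⟨σ⟩ := hne; exact le_trans (norm_nonneg _) (hg x σ)
  set μ : ℝ := (r : ℝ) * ∑ i ∈ s, g i with hμdef
  have hμ0 : 0 ≤ μ := by
    apply mul_nonneg hr0.le
    exact Finset.sum_nonneg fun i _ => hg0 i
  -- covering lemma
  have hcov : ∀ y ∈ M, ∃ z ∈ M, ∀ σ : K →+* ℂ,
      ‖σ (y - (r : K) * z)‖ ≤ μ := by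
    intro y hy
    have hy' : y ∈ Submodule.span ℤ (↑s : Set K) := by rw [hs]; exact hy
    obtain ⟨f, -, hf⟩ := Submodule.mem_span_finset.mp hy'
    refine ⟨∑ i ∈ s, ((f i / (r : ℤ)) : ℤ) • i, ?_, ?_⟩
    · have : (∑ i ∈ s, ((f i / (r : ℤ)) : ℤ) • i) ∈ Submodule.span ℤ (↑s : Set K) :=
        Submodule.sum_mem _ fun i hi => Submodule.smul_mem _ _ (Submodule.subset_span hi)
      rw [hs] at this; exact this
    · intro σ
      have key : y - (r : K) * ∑ i ∈ s, ((f i / (r : ℤ)) : ℤ) • i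
          = ∑ i ∈ s, ((f i % (r : ℤ)) : ℤ) • i := by
        rw [← hf, Finset.mul_sum, ← Finset.sum_sub_distrib]
        apply Finset.sum_congr rfl
        intro i _
        have hmod : (f i % (r : ℤ)) = f i - (r : ℤ) * (f i / (r : ℤ)) := by
          rw [Int.emod_def]
        rw [hmod, zsmul_eq_mul, zsmul_eq_mul, zsmul_eq_mul]
        push_cast
        ring
      rw [key, map_sum]
      calc ‖∑ i ∈ s, σ (((f i % (r : ℤ)) : ℤ) • i)‖
          ≤ ∑ i ∈ s, ‖σ (((f i % (r : ℤ)) : ℤ) • i)‖ :=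
            norm_sum_le _ _
        _ ≤ ∑ i ∈ s, (r : ℝ) * g i := by
            apply Finset.sum_le_sum
            intro i _
            rw [zsmul_eq_mul, map_mul]
            have h1 : σ ((f i % (r : ℤ) : ℤ) : K) = ((f i % (r : ℤ) : ℤ) : ℂ) :=
              map_intCast σ _
            rw [h1, norm_mul, Complex.norm_intCast]
            have h2 : |(f i % (r : ℤ) : ℤ)| ≤ (r : ℤ) := by
              have hrz : (0:ℤ) < (r : ℤ) := by exact_mod_cast (by omega : 0 < r)
              have hnn := Int.emod_nonneg (f i) (ne_of_gt hrz)
              have hlt := Int.emod_lt_of_pos (f i) hrz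
              rw [abs_of_nonneg hnn]; omega
            have h2' : |((f i % (r : ℤ) : ℤ) : ℝ)| ≤ (r : ℝ) := by
              rw [← Int.cast_abs]
              exact_mod_cast h2
            exact mul_le_mul h2' (hg i σ) (norm_nonneg _) hr0.le
        _ = μ := by rw [hμdef, Finset.mul_sum]
  -- the radius
  set R : ℝ := max 1 ((μ + (r:ℝ) * μ) / ((r:ℝ) - c)) with hRdef
  have hR1 : (1:ℝ) ≤ R := le_max_left _ _
  have hR0 : (0:ℝ) ≤ R := le_trans zero_le_one hR1
  have hkey : c * R + μ ≤ (r:ℝ) * (R - μ) := by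
    have hrc : (0:ℝ) < (r:ℝ) - c := by linarith
    have h2 : (μ + (r:ℝ) * μ) / ((r:ℝ) - c) ≤ R := le_max_right _ _
    have h3 : μ + (r:ℝ) * μ ≤ ((r:ℝ) - c) * R := by
      rw [div_le_iff₀ hrc] at h2; linarith
    nlinarith
  -- the finite ball
  set L : Set K := {x : K | x ∈ M ∧ ∀ σ : K →+* ℂ, ‖σ x‖ ≤ R} with hLdef
  have hLfin : L.Finite := by
    apply (NumberField.Embeddings.finite_of_norm_le K ℂ R).subset
    rintro x ⟨hx1, hx2⟩
    exact ⟨IsIntegral.of_mem_of_fg M ⟨s, hs⟩ x hx1, fun σ => by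
      simpa using hx2 σ⟩
  set Ls : Finset K := hLfin.toFinset with hLs
  have hmemLs : ∀ x : K, x ∈ Ls ↔ x ∈ M ∧ ∀ σ : K →+* ℂ, ‖σ x‖ ≤ R := by
    intro x; rw [hLs, Set.Finite.mem_toFinset]; rfl
  have h1L : (1:K) ∈ Ls := by
    rw [hmemLs]
    exact ⟨one_mem M, fun σ => by rw [map_one, norm_one]; exact hR1⟩
  have hαM : α ∈ M := Algebra.self_mem_adjoin_singleton ℤ α
  -- the step function
  have hstep : ∀ a : {x // x ∈ Ls}, ∃ p : {x // x ∈ Ls} × {x // x ∈ Ls},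
      α * (a : K) = ((r - 1 : ℕ) : K) * (p.1 : K) + (p.2 : K) := by
    rintro ⟨x, hx⟩
    rw [hmemLs] at hx
    obtain ⟨hxM, hxb⟩ := hx
    have hyM : α * x ∈ M := mul_mem hαM hxM
    obtain ⟨z, hzM, hzb⟩ := hcov (α * x) hyM
    have hyb : ∀ σ : K →+* ℂ, ‖σ (α * x)‖ ≤ c * R := by
      intro σ
      rw [map_mul, norm_mul]
      exact mul_le_mul (hcα σ) (hxb σ) (norm_nonneg _) hc0
    have hzbound : ∀ σ : K →+* ℂ, ‖σ z‖ ≤ R - μ := by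
      intro σ
      have h1 : ‖σ ((r : K) * z)‖ ≤ c * R + μ := by
        have : (r : K) * z = (α * x) - ((α * x) - (r : K) * z) := by ring
        rw [this]
        calc ‖σ ((α * x) - ((α * x) - (r : K) * z))‖
            ≤ ‖σ (α * x)‖ + ‖σ ((α * x) - (r : K) * z)‖ := by
              rw [map_sub]; exact norm_sub_le _ _
          _ ≤ c * R + μ := add_le_add (hyb σ) (hzb σ)
      have h2 : ‖σ ((r : K) * z)‖ = (r : ℝ) * ‖σ z‖ := by
        rw [map_mul, norm_mul]
        congr 1
        rw [map_natCast, Complex.norm_natCast]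
      rw [h2] at h1
      rw [← le_div_iff₀' hr0] at h1
      calc ‖σ z‖ ≤ (c * R + μ) / (r:ℝ) := h1
        _ ≤ R - μ := by rw [div_le_iff₀ hr0]; nlinarith
    have hzLs : z ∈ Ls := by
      rw [hmemLs]
      exact ⟨hzM, fun σ => le_trans (hzbound σ) (by linarith)⟩
    set u : K := α * x - ((r - 1 : ℕ) : K) * z with hu
    have hcast : ((r - 1 : ℕ) : K) = (r : K) - 1 := by
      have h1 : 1 ≤ r := by omega
      push_cast [Nat.cast_sub h1]; ring
    have huLs : u ∈ Ls := by
      rw [hmemLs]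
      constructor
      · exact sub_mem hyM (mul_mem (Subalgebra.natCast_mem M _) hzM)
      · intro σ
        have hue : u = z + ((α * x) - (r : K) * z) := by
          rw [hu, hcast]; ring
        rw [hue]
        calc ‖σ (z + ((α * x) - (r : K) * z))‖
            ≤ ‖σ z‖ + ‖σ ((α * x) - (r : K) * z)‖ := by
              rw [map_add]; exact norm_add_le _ _
          _ ≤ (R - μ) + μ := add_le_add (hzbound σ) (hzb σ)
          _ = R := by ring
    exact ⟨(⟨z, hzLs⟩, ⟨u, huLs⟩), by
      show α * x = ((r - 1 : ℕ) : K) * z + (α * x - ((r - 1 : ℕ) : K) * z); ring⟩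
  choose Z hZ using hstep
  -- indexing
  set l : ℕ := Ls.card with hl
  have hlpos : 0 < l := Finset.card_pos.mpr ⟨1, h1L⟩
  set e : Fin l ≃ {x // x ∈ Ls} := Ls.equivFin.symm with he
  have hsumC : ∀ (a : {x // x ∈ Ls}) (v : K),
      ∑ j : Fin l, (if e j = a then v else 0) = v := by
    intro a v
    rw [Fintype.sum_equiv e (fun j => if e j = a then v else 0)
      (fun b => if b = a then v else 0) (fun j => rfl)]
    simp
  have hsumN : ∀ a : {x // x ∈ Ls},
      ∑ j : Fin l, (if e j = a then (1:ℕ) else 0) = 1 := by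
    intro a
    rw [Fintype.sum_equiv e (fun j => if e j = a then (1:ℕ) else 0)
      (fun b => if b = a then (1:ℕ) else 0) (fun j => rfl)]
    simp
  refine ⟨l, hlpos,
    fun i j => (r - 1) * (if e j = (Z (e i)).1 then 1 else 0)
      + (if e j = (Z (e i)).2 then 1 else 0), ?_, ?_⟩
  · intro i
    rw [Finset.sum_add_distrib, ← Finset.mul_sum, hsumN, hsumN]
    omega
  · refine ⟨fun j => ((e j : {x // x ∈ Ls}) : K), ?_, ?_⟩
    · intro h0
      have h1 : ((e (e.symm ⟨1, h1L⟩) : {x // x ∈ Ls}) : K) = 0 := congrFun h0 _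
      rw [Equiv.apply_symm_apply] at h1
      exact one_ne_zero h1
    · funext i
      rw [Matrix.mulVec, dotProduct]
      have hterm : ∀ j : Fin l,
          (Matrix.map (fun i j => (r - 1) * (if e j = (Z (e i)).1 then 1 else 0)
              + (if e j = (Z (e i)).2 then 1 else 0) : Matrix (Fin l) (Fin l) ℕ)
              (Nat.cast : ℕ → K)) i j * ((e j : {x // x ∈ Ls}) : K)
          = (if e j = (Z (e i)).1 then ((r - 1 : ℕ) : K) * (((Z (e i)).1 : {x // x ∈ Ls}) : K) else 0)
            + (if e j = (Z (e i)).2 then (((Z (e i)).2 : {x // x ∈ Ls}) : K) else 0) := by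
        intro j
        change ((((r - 1) * (if e j = (Z (e i)).1 then 1 else 0)
          + (if e j = (Z (e i)).2 then 1 else 0) : ℕ) : K)) * _ = _
        by_cases h1 : e j = (Z (e i)).1 <;> by_cases h2 : e j = (Z (e i)).2
        · simp only [if_pos h1, if_pos h2]
          rw [← h1, ← h2]; push_cast; ring
        · simp only [if_pos h1, if_neg h2]
          rw [← h1]; push_cast; ring
        · simp only [if_neg h1, if_pos h2]
          rw [← h2]; push_cast; ring
        · simp only [if_neg h1, if_neg h2]
          push_cast; ring
      rw [Finset.sum_congr rfl (fun j _ => hterm j), Finset.sum_add_distrib,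
        hsumC, hsumC]
      rw [Pi.smul_apply, smul_eq_mul]
      exact (hZ (e i)).symm
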